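/- For x ∈ S^{p-1} and tangent vector z at x with ‖z‖ ≤ π/2, the geodesic distance between exp_x(z) and R_x(z) satisfies arccos(exp_x(z) · R_x(z)) ≤ ‖z‖ − arctan(‖z‖). -/

import Mathlib

open Real

theorem dist_expMap_retraction_le (p : ℕ) (x z : EuclideanSpace ℝ (Fin p))
    (hx : ‖x‖ = 1) (hz : (inner ℝ x z : ℝ) = 0) (hz0 : z ≠ 0) (hzle : ‖z‖ ≤ π / 2) :
    Real.arccos (inner ℝ (Real.cos ‖z‖ • x + Real.sin ‖z‖ • (‖z‖⁻¹ • z))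
        (‖x + z‖⁻¹ • (x + z)) : ℝ) ≤ ‖z‖ - Real.arctan ‖z‖ := by
  set r := ‖z‖ with hr
  have hr0 : 0 < r := norm_pos_iff.mpr hz0
  have hzx : (inner ℝ z x : ℝ) = 0 := by rw [real_inner_comm]; exact hz
  have hs : (0:ℝ) < Real.sqrt (1 + r ^ 2) := Real.sqrt_pos.mpr (by positivity)
  have hnorm : ‖x + z‖ = Real.sqrt (1 + r ^ 2) := by
    have h := norm_add_sq_real x z
    rw [hx, hz] at h
    rw [← Real.sqrt_sq (norm_nonneg (x + z)), h]
    norm_num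
    rfl
  have hinner : (inner ℝ (Real.cos r • x + Real.sin r • (r⁻¹ • z)) (‖x + z‖⁻¹ • (x + z)) : ℝ)
      = (Real.cos r + Real.sin r * r) / Real.sqrt (1 + r ^ 2) := by
    rw [hnorm]
    simp only [inner_add_left, inner_add_right, real_inner_smul_left, real_inner_smul_right,
      real_inner_self_eq_norm_sq, hz, hzx, hx, ← hr]
    field_simp
    ring
  rw [hinner]
  have hcos : (Real.cos r + Real.sin r * r) / Real.sqrt (1 + r ^ 2)
      = Real.cos (r - Real.arctan r) := by
    rw [Real.cos_sub, Real.cos_arctan, Real.sin_arctan]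
    field_simp
  have harctan : Real.arctan r ≤ r := by
    have h1 := Real.le_tan (by rw [← Real.arctan_zero]; exact (Real.arctan_strictMono hr0).le : (0:ℝ) ≤ Real.arctan r) (Real.arctan_lt_pi_div_two r)
    rwa [Real.tan_arctan] at h1
  rw [hcos, Real.arccos_cos (by linarith) (by
    have := (by rw [← Real.arctan_zero]; exact (Real.arctan_strictMono hr0).le : (0:ℝ) ≤ Real.arctan r)
    linarith [Real.pi_pos])]
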